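/- Let f be a normalized nondegenerate C² speed (f(0,1)=1) and v the slope of the bowl-type solution solving v'=(1+v²)g(v/r). Then for every ε > 0, v(r) ≥ r - ε for all sufficiently large r; i.e. v(r) = r + o(1) as r → ∞. -/

import Mathlib

open Filter

open Set Topology


/-- If w starts negative and has strictly negative derivative at every interior zero,
then it stays negative. -/
lemma cross_neg {w : ℝ → ℝ} {a b : ℝ} (hab : a ≤ b)
    (hw : ∀ r ∈ Set.Icc a b, ContinuousWithinAt w (Set.Icc a b) r)
    (ha : w a < 0)
    (hkey : ∀ c, a < c → c ≤ b → w c = 0 → ∃ d, HasDerivAt w d c ∧ d < 0) :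
    w b < 0 := by
  by_contra hb
  push_neg at hb
  set s : Set ℝ := {r | r ∈ Set.Icc a b ∧ 0 ≤ w r} with hs
  have hbs : b ∈ s := ⟨⟨hab, le_rfl⟩, hb⟩
  have hne : s.Nonempty := ⟨b, hbs⟩
  have hbd : BddBelow s := ⟨a, fun r hr => hr.1.1⟩
  set c := sInf s with hc
  have hcb : c ≤ b := csInf_le hbd hbs
  have hac : a ≤ c := le_csInf hne fun r hr => hr.1.1
  have hccl : c ∈ closure s := csInf_mem_closure hne hbd
  have hlt : ∀ r, a ≤ r → r < c → w r < 0 := by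
    intro r har hrc
    by_contra h
    push_neg at h
    exact absurd (csInf_le hbd ⟨⟨har, hrc.le.trans hcb⟩, h⟩) (not_le.2 hrc)
  have hnb : (𝓝[s] c).NeBot := mem_closure_iff_nhdsWithin_neBot.mp hccl
  have hwc_ge : 0 ≤ w c := by
    have ht : Tendsto w (𝓝[s] c) (𝓝 (w c)) :=
      ((hw c ⟨hac, hcb⟩).mono fun r hr => hr.1).tendsto
    exact ge_of_tendsto ht (eventually_nhdsWithin_of_forall fun r hr => hr.2)
  have hac' : a < c := hac.lt_of_ne fun h => absurd (h ▸ hwc_ge) (not_le.2 ha)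
  have hwc_le : w c ≤ 0 := by
    have hsub : Set.Ico a c ⊆ Set.Icc a b := fun r hr => ⟨hr.1, hr.2.le.trans hcb⟩
    have hnb2 : (𝓝[Set.Ico a c] c).NeBot := by
      refine mem_closure_iff_nhdsWithin_neBot.mp ?_
      rw [closure_Ico hac'.ne]
      exact ⟨hac, le_rfl⟩
    have ht : Tendsto w (𝓝[Set.Ico a c] c) (𝓝 (w c)) :=
      ((hw c ⟨hac, hcb⟩).mono hsub).tendsto
    exact le_of_tendsto ht (eventually_nhdsWithin_of_forall fun r hr => (hlt r hr.1 hr.2).le)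
  have hwc : w c = 0 := le_antisymm hwc_le hwc_ge
  obtain ⟨d, hd, hdneg⟩ := hkey c hac' hcb hwc
  rw [hasDerivAt_iff_tendsto_slope] at hd
  have hmono : 𝓝[Set.Iio c] c ≤ 𝓝[{c}ᶜ] c :=
    nhdsWithin_mono _ fun r hr => ne_of_lt hr
  have h1 : ∀ᶠ r in 𝓝[Set.Iio c] c, slope w c r < 0 :=
    (hd.mono_left hmono).eventually_lt_const hdneg
  have h2 : ∀ᶠ r in 𝓝[Set.Iio c] c, a < r :=
    eventually_nhdsWithin_of_eventually_nhds (eventually_gt_nhds hac')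
  have h3 : ∀ᶠ r in 𝓝[Set.Iio c] c, r ∈ Set.Iio c := eventually_mem_nhdsWithin
  obtain ⟨r, hs1, hs2, hs3⟩ := (h1.and (h2.and h3)).exists
  have hwr : w r < 0 := hlt r hs2.le hs3
  have : (0:ℝ) < slope w c r := by
    rw [slope_def_field]
    rw [hwc]
    exact div_pos_of_neg_of_neg (by linarith) (sub_neg.2 (show r < c from hs3))
  linarith

/-- If w starts nonnegative and has strictly positive derivative at every zero,
then it stays nonnegative. -/
lemma stay_nonneg {w : ℝ → ℝ} {a b : ℝ} (hab : a ≤ b)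
    (hw : ∀ r ∈ Set.Icc a b, ContinuousWithinAt w (Set.Icc a b) r)
    (ha : 0 ≤ w a)
    (hkey : ∀ c, a ≤ c → c ≤ b → w c = 0 → ∃ d, HasDerivAt w d c ∧ 0 < d) :
    0 ≤ w b := by
  by_contra hb
  push_neg at hb
  set s : Set ℝ := {r | r ∈ Set.Icc a b ∧ w r < 0} with hs
  have hbs : b ∈ s := ⟨⟨hab, le_rfl⟩, hb⟩
  have hne : s.Nonempty := ⟨b, hbs⟩
  have hbd : BddBelow s := ⟨a, fun r hr => hr.1.1⟩
  set c := sInf s with hc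
  have hcb : c ≤ b := csInf_le hbd hbs
  have hac : a ≤ c := le_csInf hne fun r hr => hr.1.1
  have hccl : c ∈ closure s := csInf_mem_closure hne hbd
  have hnb : (𝓝[s] c).NeBot := mem_closure_iff_nhdsWithin_neBot.mp hccl
  have hge : ∀ r, a ≤ r → r < c → 0 ≤ w r := by
    intro r har hrc
    by_contra h
    push_neg at h
    exact absurd (csInf_le hbd ⟨⟨har, hrc.le.trans hcb⟩, h⟩) (not_le.2 hrc)
  have hwc_le : w c ≤ 0 := by
    have ht : Tendsto w (𝓝[s] c) (𝓝 (w c)) :=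
      ((hw c ⟨hac, hcb⟩).mono fun r hr => hr.1).tendsto
    exact le_of_tendsto ht (eventually_nhdsWithin_of_forall fun r hr => hr.2.le)
  have hwc_ge : 0 ≤ w c := by
    rcases eq_or_lt_of_le hac with h | hac'
    · rw [← h]; exact ha
    · have hsub : Set.Ico a c ⊆ Set.Icc a b := fun r hr => ⟨hr.1, hr.2.le.trans hcb⟩
      have hnb2 : (𝓝[Set.Ico a c] c).NeBot := by
        refine mem_closure_iff_nhdsWithin_neBot.mp ?_
        rw [closure_Ico hac'.ne]
        exact ⟨hac, le_rfl⟩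
      have ht : Tendsto w (𝓝[Set.Ico a c] c) (𝓝 (w c)) :=
        ((hw c ⟨hac, hcb⟩).mono hsub).tendsto
      exact ge_of_tendsto ht (eventually_nhdsWithin_of_forall fun r hr => hge r hr.1 hr.2)
  have hwc : w c = 0 := le_antisymm hwc_le hwc_ge
  obtain ⟨d, hd, hdpos⟩ := hkey c hac hcb hwc
  rw [hasDerivAt_iff_tendsto_slope] at hd
  have hsgt : s ⊆ Set.Ioi c := by
    intro r hr
    rcases lt_or_eq_of_le (csInf_le hbd hr) with h | h
    · exact h
    · exfalso; rw [← h] at hr; exact absurd hwc (ne_of_lt hr.2)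
  have hmono : 𝓝[s] c ≤ 𝓝[{c}ᶜ] c :=
    nhdsWithin_mono _ fun r hr => ne_of_gt (hsgt hr)
  have h1 : ∀ᶠ r in 𝓝[s] c, 0 < slope w c r :=
    (hd.mono_left hmono).eventually_const_lt hdpos
  have h2 : ∀ᶠ r in 𝓝[s] c, r ∈ s := eventually_mem_nhdsWithin
  obtain ⟨r, hs1, hs2⟩ := (h1.and h2).exists
  have hwr : w r < 0 := hs2.2
  have : slope w c r < 0 := by
    rw [slope_def_field, hwc]
    exact div_neg_of_neg_of_pos (by linarith) (by simpa using sub_pos.2 (show c < r from hsgt hs2))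
  linarith

/-- Quantitative growth: derivative at least K on an interval. -/
lemma grow {v dv : ℝ → ℝ} {a b K : ℝ} (hab : a ≤ b)
    (hd : ∀ r ∈ Set.Icc a b, HasDerivAt v (dv r) r)
    (hK : ∀ r ∈ Set.Icc a b, K ≤ dv r) :
    v a + K * (b - a) ≤ v b := by
  set g : ℝ → ℝ := fun r => v r - K * r with hg
  have hgd : ∀ r ∈ Set.Icc a b, HasDerivAt g (dv r - K) r := by
    intro r hr
    have h1 : HasDerivAt (fun r : ℝ => K * r) (K * 1) r := (hasDerivAt_id r).const_mul K
    exact ((hd r hr).sub h1).congr_deriv (by ring)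
  have hmono : MonotoneOn g (Set.Icc a b) := by
    apply monotoneOn_of_deriv_nonneg (convex_Icc a b)
    · exact fun r hr => (hgd r hr).continuousAt.continuousWithinAt
    · intro r hr
      rw [interior_Icc] at hr
      exact ((hgd r ⟨hr.1.le, hr.2.le⟩).differentiableAt).differentiableWithinAt
    · intro r hr
      rw [interior_Icc] at hr
      have := (hgd r ⟨hr.1.le, hr.2.le⟩).deriv
      rw [this]
      have := hK r ⟨hr.1.le, hr.2.le⟩
      linarith
  have := hmono ⟨le_rfl, hab⟩ ⟨hab, le_rfl⟩ hab
  simp only [hg] at this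
  nlinarith

/-- Quantitative bound above: derivative at most K on an interval. -/
lemma shrink {v dv : ℝ → ℝ} {a b K : ℝ} (hab : a ≤ b)
    (hd : ∀ r ∈ Set.Icc a b, HasDerivAt v (dv r) r)
    (hK : ∀ r ∈ Set.Icc a b, dv r ≤ K) :
    v b ≤ v a + K * (b - a) := by
  have h := grow (v := fun r => -v r) (dv := fun r => -dv r) (K := -K) hab
    (fun r hr => (hd r hr).neg) (fun r hr => neg_le_neg (hK r hr))
  linarith

set_option maxHeartbeats 1000000 in
/-- For a normalized nondegenerate C² speed, the bowl soliton slope satisfies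
v(r) ≥ r - ε for large r, i.e. v(r) = r + o(1). -/
theorem stmt6 (f : ℝ × ℝ → ℝ)
    (hf : ContDiff ℝ 2 f)
    (hhom : ∀ c : ℝ, 0 < c → ∀ x y : ℝ, f (c * x, c * y) = c * f (x, y))
    (hfx : ∀ p : ℝ × ℝ, 0 < deriv (fun t => f (t, p.2)) p.1)
    (hfy : ∀ p : ℝ × ℝ, 0 < deriv (fun t => f (p.1, t)) p.2)
    (hnorm : f (0, 1) = 1)
    (v dv : ℝ → ℝ) (hv0 : v 0 = 0)
    (hvpos : ∀ r : ℝ, 0 < r → 0 < v r)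
    (hode : ∀ r : ℝ, 0 < r → HasDerivAt v (dv r) r ∧
      f (dv r / (1 + (v r) ^ 2), v r / r) = 1) :
    (∀ ε : ℝ, 0 < ε → ∀ᶠ r in atTop, r - ε ≤ v r) ∧
    Tendsto (fun r => v r - r) atTop (nhds 0) := by
  -- ## Basic facts about f
  have monoX : ∀ y : ℝ, StrictMono (fun t => f (t, y)) := fun y =>
    strictMono_of_deriv_pos (fun t => by simpa using hfx (t, y))
  have monoY : ∀ x : ℝ, StrictMono (fun t => f (x, t)) := fun x =>
    strictMono_of_deriv_pos (fun t => by simpa using hfy (x, t))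
  have f00 : f (0, 0) = 0 := by
    have h2 := hhom 2 (by norm_num) 0 0
    simp only [mul_zero] at h2
    linarith
  have h0 : ∀ y : ℝ, 0 ≤ y → f (0, y) = y := by
    intro y hy
    rcases eq_or_lt_of_le hy with h | h
    · rw [← h]; exact f00
    · have := hhom y h 0 1
      simpa [hnorm] using this
  have hβ : 0 < f (1, 0) := by
    have h : f (0, 0) < f (1, 0) := monoX 0 zero_lt_one
    rw [f00] at h
    exact h
  set β := f (1, 0) with hβdef
  have hb1 : ∀ t : ℝ, 0 ≤ t → β ≤ f (1, t) := fun t ht => (monoY 1).monotone ht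
  set Q : ℝ := 2 / β with hQdef
  have hQpos : 0 < Q := by positivity
  have hQ2 : 2 ≤ f (Q, 1/2) := by
    have h1 : f (Q * 1, Q * (1 / (2 * Q))) = Q * f (1, 1 / (2 * Q)) := hhom Q hQpos 1 (1 / (2 * Q))
    have h2 : Q * (1 / (2 * Q)) = 1/2 := by
      rw [mul_one_div, div_eq_div_iff (by positivity : (2 * Q) ≠ 0) (by norm_num : (2:ℝ) ≠ 0)]
      ring
    have h3 : β ≤ f (1, 1 / (2 * Q)) := hb1 _ (by positivity)
    have h4 : Q * β ≤ Q * f (1, 1 / (2 * Q)) := by nlinarith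
    have h5 : Q * β = 2 := by rw [hQdef, div_mul_cancel₀ _ (ne_of_gt hβ)]
    rw [mul_one, h2] at h1
    linarith [h1 ▸ (h5 ▸ h4)]
  -- small m0 with f (m0, 1/2) < 1
  obtain ⟨m0, hm0f, hm0pos⟩ : ∃ m0 : ℝ, f (m0, 1/2) < 1 ∧ 0 < m0 := by
    have hc : Tendsto (fun t : ℝ => f (t, 1/2)) (𝓝 0) (𝓝 (f (0, 1/2))) :=
      ((hf.continuous.comp (continuous_id.prodMk continuous_const)).continuousAt : _)
    rw [h0 (1/2) (by norm_num)] at hc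
    have h1 : ∀ᶠ t : ℝ in 𝓝 0, f (t, 1/2) < 1 :=
      hc.eventually_lt_const (by norm_num)
    have h2 : ∀ᶠ t : ℝ in 𝓝[>] (0:ℝ), f (t, 1/2) < 1 := h1.filter_mono nhdsWithin_le_nhds
    obtain ⟨t, ht1, ht2⟩ := (h2.and (eventually_mem_nhdsWithin (s := Set.Ioi (0:ℝ)))).exists
    exact ⟨t, ht1, ht2⟩
  -- Lipschitz-type constant M
  obtain ⟨M, hM1, hlip⟩ : ∃ M : ℝ, 1 ≤ M ∧ ∀ p q : ℝ × ℝ,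
      p ∈ Metric.closedBall (0 : ℝ × ℝ) (Q + 2) → q ∈ Metric.closedBall (0 : ℝ × ℝ) (Q + 2) →
      ‖f p - f q‖ ≤ M * ‖p - q‖ := by
    have hfd : Continuous (fderiv ℝ f) := hf.continuous_fderiv two_ne_zero
    obtain ⟨C, hC⟩ := (isCompact_closedBall (0 : ℝ × ℝ) (Q + 2)).exists_bound_of_continuousOn
      hfd.continuousOn
    refine ⟨max C 1, le_max_right _ _, fun p q hp hq => ?_⟩
    exact (convex_closedBall _ _).norm_image_sub_le_of_norm_fderiv_le
      (fun x _ => (hf.differentiable two_ne_zero).differentiableAt)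
      (fun x hx => le_trans (hC x hx) (le_max_left _ _)) hq hp
  have hMpos : 0 < M := by linarith
  have hmem : ∀ q' y' : ℝ, 0 ≤ q' → q' ≤ Q → 0 ≤ y' → y' ≤ 1 →
      (q', y') ∈ Metric.closedBall (0 : ℝ × ℝ) (Q + 2) := by
    intro q' y' h1 h2 h3 h4
    rw [Metric.mem_closedBall, dist_zero_right, Prod.norm_def]
    have : ‖q'‖ = q' := abs_of_nonneg h1
    have : ‖y'‖ = y' := abs_of_nonneg h3
    simp only [Real.norm_eq_abs]
    rw [abs_of_nonneg h1, abs_of_nonneg h3]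
    exact max_le (by linarith) (by linarith)
  -- ## Pointwise key lemmas
  have hkeyle : ∀ r : ℝ, 0 < r → r ≤ v r → dv r ≤ 0 := by
    intro r hr hvr
    obtain ⟨hD, hE⟩ := hode r hr
    by_contra h
    push_neg at h
    have hq : 0 < dv r / (1 + v r ^ 2) := div_pos h (by positivity)
    have h1 : f (0, v r / r) < f (dv r / (1 + v r ^ 2), v r / r) := monoX _ hq
    rw [hE, h0 _ (le_of_lt (div_pos (lt_of_lt_of_le hr hvr) hr))] at h1
    have : 1 ≤ v r / r := (one_le_div hr).2 hvr
    linarith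
  have hkeypos : ∀ r : ℝ, 0 < r → v r < r → 0 < dv r := by
    intro r hr hvr
    obtain ⟨hD, hE⟩ := hode r hr
    by_contra h
    push_neg at h
    have hq : dv r / (1 + v r ^ 2) ≤ 0 :=
      div_nonpos_of_nonpos_of_nonneg h (by positivity)
    have h1 : f (dv r / (1 + v r ^ 2), v r / r) ≤ f (0, v r / r) := (monoX _).monotone hq
    rw [hE, h0 _ (le_of_lt (div_pos (hvpos r hr) hr))] at h1
    have : v r / r < 1 := (div_lt_one hr).2 hvr
    linarith
  have hq1 : ∀ r : ℝ, 0 < r → v r ≤ r / 2 → m0 ≤ dv r / (1 + v r ^ 2) := by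
    intro r hr hvr
    obtain ⟨hD, hE⟩ := hode r hr
    by_contra h
    push_neg at h
    have hy : v r / r ≤ 1/2 := by
      rw [div_le_iff₀ hr]; linarith
    have h1 : f (dv r / (1 + v r ^ 2), v r / r) ≤ f (dv r / (1 + v r ^ 2), 1/2) :=
      (monoY _).monotone hy
    have h2 : f (dv r / (1 + v r ^ 2), 1/2) < f (m0, 1/2) := monoX _ h
    rw [hE] at h1
    linarith
  have hq2 : ∀ r : ℝ, 0 < r → r / 2 ≤ v r → v r < r →
      (1 - v r / r) / M ≤ dv r / (1 + v r ^ 2) := by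
    intro r hr hv2 hvr
    obtain ⟨hD, hE⟩ := hode r hr
    have hqpos : 0 < dv r / (1 + v r ^ 2) := div_pos (hkeypos r hr hvr) (by positivity)
    set q := dv r / (1 + v r ^ 2) with hqdef
    set y := v r / r with hydef
    have hy12 : 1/2 ≤ y := by
      rw [hydef, le_div_iff₀ hr]; linarith
    have hy1 : y < 1 := (div_lt_one hr).2 hvr
    have hy0 : 0 < y := div_pos (hvpos r hr) hr
    have hqQ : q ≤ Q := by
      by_contra h
      push_neg at h
      have h1 : f (q, 1/2) ≤ f (q, y) := (monoY q).monotone hy12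
      have h2 : f (Q, 1/2) < f (q, 1/2) := monoX _ h
      rw [hE] at h1
      linarith
    have hfy0 : f (0, y) = y := h0 y hy0.le
    have hnorm2 : ‖f (q, y) - f (0, y)‖ = 1 - y := by
      rw [hE, hfy0, Real.norm_eq_abs, abs_of_nonneg (by linarith)]
    have hsub : (q, y) - ((0 : ℝ), y) = (q, 0) := by
      simp [Prod.ext_iff]
    have hnormsub : ‖(q, y) - ((0 : ℝ), y)‖ = q := by
      rw [hsub, Prod.norm_def, norm_zero, Real.norm_eq_abs, abs_of_nonneg hqpos.le]
      exact max_eq_left hqpos.le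
    have hmem1 := hmem q y hqpos.le hqQ hy0.le hy1.le
    have hmem2 := hmem 0 y le_rfl hQpos.le hy0.le hy1.le
    have := hlip (q, y) (0, y) hmem1 hmem2
    rw [hnorm2, hnormsub] at this
    rw [div_le_iff₀ hMpos]
    linarith [this, mul_comm M q]
  -- ## continuity of v on intervals
  have hvc : ∀ a b : ℝ, 0 < a → ∀ r ∈ Set.Icc a b, ContinuousWithinAt v (Set.Icc a b) r :=
    fun a b ha r hr => ((hode r (lt_of_lt_of_le ha hr.1)).1.continuousAt).continuousWithinAt
  -- ## Step A2: v gets below the diagonal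
  obtain ⟨r0, hr01, hr0v⟩ : ∃ r0 : ℝ, 1 ≤ r0 ∧ v r0 < r0 := by
    by_contra h
    push_neg at h
    set b := max 1 (v 1 + 1) with hbdef
    have hb1 : (1:ℝ) ≤ b := le_max_left _ _
    have hd : ∀ r ∈ Set.Icc (1:ℝ) b, HasDerivAt v (dv r) r :=
      fun r hr => (hode r (lt_of_lt_of_le one_pos hr.1)).1
    have hK : ∀ r ∈ Set.Icc (1:ℝ) b, dv r ≤ 0 :=
      fun r hr => hkeyle r (lt_of_lt_of_le one_pos hr.1) (h r hr.1)
    have := shrink hb1 hd hK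
    have hvb : b ≤ v b := h b hb1
    have : v b ≤ v 1 := by linarith
    have : v 1 + 1 ≤ b := le_max_right _ _
    linarith
  have hr0pos : 0 < r0 := lt_of_lt_of_le one_pos hr01
  -- ## Step A1: v stays below the diagonal
  have hub : ∀ r : ℝ, r0 ≤ r → v r < r := by
    intro b hb
    have hcross := cross_neg (w := fun r => v r - r) hb
      (fun r hr => ((hvc r0 b hr0pos r hr).sub continuousWithinAt_id))
      (show v r0 - r0 < 0 by linarith)
      (fun c hc1 hc2 hw => by
        have hcpos : 0 < c := lt_trans hr0pos hc1
        have hw' : v c - c = 0 := hw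
        have hvc0 : v c = c := by linarith
        have hdvc : dv c ≤ 0 := hkeyle c hcpos (le_of_eq hvc0.symm)
        exact ⟨dv c - 1, ((hode c hcpos).1.sub (hasDerivAt_id c)), by linarith⟩)
    have hcross' : v b - b < 0 := hcross
    linarith
  -- ## monotonicity of v beyond r0
  have hmono : ∀ a b : ℝ, r0 ≤ a → a ≤ b → v a ≤ v b := by
    intro a b ha hab
    have := grow (K := 0) hab
      (fun r hr => (hode r (lt_of_lt_of_le (lt_of_lt_of_le hr0pos ha) hr.1)).1)
      (fun r hr => (hkeypos r (lt_of_lt_of_le (lt_of_lt_of_le hr0pos ha) hr.1)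
        (hub r (le_trans ha hr.1))).le)
    linarith
  -- ## v is eventually above any level V
  have hVgrow : ∀ V : ℝ, 0 < V → ∃ R2 : ℝ, r0 ≤ R2 ∧ ∀ r : ℝ, R2 ≤ r → V ≤ v r := by
    intro V hV
    set a := max r0 (2 * V) with hadef
    have har0 : r0 ≤ a := le_max_left _ _
    have haV : 2 * V ≤ a := le_max_right _ _
    have hapos : 0 < a := lt_of_lt_of_le hr0pos har0
    set T := (V + 1) / m0 with hTdef
    have hTpos : 0 < T := by positivity
    obtain ⟨b, hb1, hb2⟩ : ∃ b ∈ Set.Icc a (a + T), V ≤ v b := by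
      by_contra h
      push_neg at h
      have hK : ∀ r ∈ Set.Icc a (a + T), m0 ≤ dv r := by
        intro r hr
        have hrpos : 0 < r := lt_of_lt_of_le hapos hr.1
        have hvV : v r < V := h r hr
        have hvr2 : v r ≤ r / 2 := by
          have : 2 * V ≤ r := le_trans haV hr.1
          linarith
        have hq := hq1 r hrpos hvr2
        have heq : dv r = dv r / (1 + v r ^ 2) * (1 + v r ^ 2) :=
          (div_mul_cancel₀ _ (by positivity : (1 + v r ^ 2) ≠ 0)).symm
        rw [heq]
        nlinarith [sq_nonneg (v r)]
      have hgrow := grow (by linarith : a ≤ a + T)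
        (fun r hr => (hode r (lt_of_lt_of_le hapos hr.1)).1) hK
      have hmT : m0 * T = V + 1 := by rw [hTdef]; field_simp
      have hva : 0 < v a := hvpos a hapos
      have hvb : v (a + T) < V := h (a + T) ⟨by linarith, le_rfl⟩
      have : a + T - a = T := by ring
      rw [this, hmT] at hgrow
      linarith
    exact ⟨b, le_trans har0 hb1.1, fun r hr => le_trans hb2 (hmono b r (le_trans har0 hb1.1) hr)⟩
  -- ## level V0 making the low branch strong
  set V0 : ℝ := 2 / m0 + 1 with hV0def
  have hV0pos : 0 < V0 := by positivity
  have hV0prop : ∀ x : ℝ, V0 ≤ x → 2 ≤ m0 * (1 + x ^ 2) := by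
    intro x hx
    rw [hV0def] at hx
    have h1 : 2 / m0 ≤ x := by linarith
    have h2 : 2 ≤ m0 * x := by
      rw [div_le_iff₀ hm0pos] at h1
      linarith [mul_comm x m0]
    have hx1 : 1 ≤ x := by
      have : 0 < 2 / m0 := by positivity
      linarith
    nlinarith
  obtain ⟨R2, hR2r0, hR2⟩ := hVgrow V0 hV0pos
  -- ## Main part: for every ε > 0, eventually r - ε ≤ v r
  have hmain : ∀ ε : ℝ, 0 < ε → ∃ b2 : ℝ, ∀ r : ℝ, b2 ≤ r → r - ε ≤ v r := by
    intro ε hε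
    set R := max R2 (8 * M / ε) with hRdef
    have hRR2 : R2 ≤ R := le_max_left _ _
    have hRM : 8 * M / ε ≤ R := le_max_right _ _
    have hRr0 : r0 ≤ R := le_trans hR2r0 hRR2
    have hRpos : 0 < R := lt_of_lt_of_le hr0pos hRr0
    have keybig : ∀ r : ℝ, R ≤ r → v r ≤ r - ε → 2 ≤ dv r := by
      intro r hRr hvr
      have hrpos : 0 < r := lt_of_lt_of_le hRpos hRr
      have hvlt : v r < r := by linarith
      have heq : dv r = dv r / (1 + v r ^ 2) * (1 + v r ^ 2) :=
        (div_mul_cancel₀ _ (by positivity : (1 + v r ^ 2) ≠ 0)).symm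
      rcases le_or_gt (v r) (r / 2) with h | h
      · have hq := hq1 r hrpos h
        have hvV0 : V0 ≤ v r := hR2 r (le_trans hRR2 hRr)
        have h2 := hV0prop (v r) hvV0
        rw [heq]
        nlinarith [sq_nonneg (v r)]
      · have hq := hq2 r hrpos h.le hvlt
        have hy : ε / r ≤ 1 - v r / r := by
          have h1 : ε ≤ r - v r := by linarith
          have h3 : (r - v r) / r = 1 - v r / r := by
            rw [sub_div, div_self (ne_of_gt hrpos)]
          rw [← h3]
          gcongr
        have hq' : ε / r / M ≤ dv r / (1 + v r ^ 2) := by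
          refine le_trans ?_ hq
          gcongr
        have hr8 : 8 * M ≤ ε * r := by
          rw [div_le_iff₀ hε] at hRM
          calc 8 * M ≤ R * ε := hRM
          _ = ε * R := by ring
          _ ≤ ε * r := by nlinarith
        have hv2 : (r / 2) ^ 2 ≤ v r ^ 2 := by
          apply pow_le_pow_left₀ (by positivity) h.le
        have hA : 0 < ε / r / M := by positivity
        have key2 : 2 ≤ ε / r / M * (1 + (r / 2) ^ 2) := by
          rw [div_div, div_mul_eq_mul_div, le_div_iff₀ (by positivity)]
          have hrM : r ≥ 8 * M / ε := le_trans hRM hRr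
          nlinarith [hr8, hM1, hrpos, hε]
        have key3 : ε / r / M * (1 + (r / 2) ^ 2) ≤ dv r / (1 + v r ^ 2) * (1 + v r ^ 2) := by
          apply mul_le_mul hq' (by nlinarith) (by positivity)
          linarith [hq', hA]
        rw [heq]
        linarith
    -- existence of a point above r - ε
    obtain ⟨b2, hb2R, hb2v⟩ : ∃ b2 : ℝ, R ≤ b2 ∧ b2 - ε ≤ v b2 := by
      by_contra h
      push_neg at h
      have hK : ∀ r ∈ Set.Icc R (2 * R), 2 ≤ dv r := by
        intro r hr
        exact keybig r hr.1 (le_of_lt (h r hr.1))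
      have hgrow := grow (by linarith : R ≤ 2 * R)
        (fun r hr => (hode r (lt_of_lt_of_le hRpos hr.1)).1) hK
      have hvR : 0 < v R := hvpos R hRpos
      have hvb : v (2 * R) < 2 * R - ε := h (2 * R) (by linarith)
      nlinarith
    -- stay above r - ε
    refine ⟨b2, fun b hb => ?_⟩
    have hb2pos : 0 < b2 := lt_of_lt_of_le hRpos hb2R
    have hstay := stay_nonneg (w := fun r => v r - (r - ε)) hb
      (fun r hr => ((hvc b2 b hb2pos r hr).sub (continuousWithinAt_id.sub continuousWithinAt_const)))
      (show 0 ≤ v b2 - (b2 - ε) by linarith)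
      (fun c hc1 hc2 hw => by
        have hcpos : 0 < c := lt_of_lt_of_le hb2pos hc1
        have hw' : v c - (c - ε) = 0 := hw
        have hvc0 : v c = c - ε := by linarith
        have hdvc : 2 ≤ dv c := keybig c (le_trans hb2R hc1) (le_of_eq hvc0)
        exact ⟨dv c - 1, ((hode c hcpos).1.sub ((hasDerivAt_id c).sub_const ε)), by linarith⟩)
    have hstay' : 0 ≤ v b - (b - ε) := hstay
    linarith
  constructor
  · intro ε hε
    obtain ⟨b2, hb2⟩ := hmain ε hε
    exact eventually_atTop.2 ⟨b2, hb2⟩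
  · rw [Metric.tendsto_atTop]
    intro ε hε
    obtain ⟨b2, hb2⟩ := hmain (ε / 2) (by linarith)
    refine ⟨max b2 r0, fun r hr => ?_⟩
    have hr1 : b2 ≤ r := le_trans (le_max_left _ _) hr
    have hr2 : r0 ≤ r := le_trans (le_max_right _ _) hr
    have h1 : r - ε / 2 ≤ v r := hb2 r hr1
    have h2 : v r < r := hub r hr2
    rw [Real.dist_eq, sub_zero, abs_sub_comm, abs_of_nonneg (by linarith)]
    linarith
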